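/- Let B ⊆ (ℂ*)ⁿ be a nonempty subset and v ∈ ℤⁿ a nonzero primitive vector. Suppose that for every ν ∈ ℤⁿ with ⟨ν, v⟩ = 0 the character χ_ν(z) = z₁^{ν₁}⋯zₙ^{νₙ} is constant on B. Then there exists a ∈ (ℂ*)ⁿ such that B ⊆ a·C_v, where C_v = { (e^{v₁ w}, …, e^{vₙ w}) : w ∈ ℂ } and a·C_v denotes coordinatewise multiplication. -/

import Mathlib

/-- Bezout for finite families in ℤ: the gcd is an integer combination. -/
lemma exists_bezout_finset {ι : Type*} [DecidableEq ι] (s : Finset ι) (f : ι → ℤ) :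
    ∃ u : ι → ℤ, ∑ i ∈ s, u i * f i = s.gcd f := by
  induction s using Finset.induction_on with
  | empty => exact ⟨0, by simp⟩
  | @insert a s ha ih =>
    obtain ⟨u, hu⟩ := ih
    refine ⟨fun i => if i = a then Int.gcdA (f a) (s.gcd f)
      else Int.gcdB (f a) (s.gcd f) * u i, ?_⟩
    rw [Finset.sum_insert ha, Finset.gcd_insert]
    have h1 : ∑ i ∈ s, (if i = a then Int.gcdA (f a) (s.gcd f)
        else Int.gcdB (f a) (s.gcd f) * u i) * f i
        = Int.gcdB (f a) (s.gcd f) * ∑ i ∈ s, u i * f i := by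
      rw [Finset.mul_sum]
      refine Finset.sum_congr rfl fun i hi => ?_
      rw [if_neg (by rintro rfl; exact ha hi), mul_assoc]
    simp only []
    rw [if_pos trivial, h1, hu]
    have := Int.gcd_eq_gcd_ab (f a) (s.gcd f)
    have hg : gcd (f a) (s.gcd f) = (Int.gcd (f a) (s.gcd f) : ℤ) := by
      rw [Int.coe_gcd]
    rw [hg, this]; ring

/-- If every character `χ_ν` with `⟨ν, v⟩ = 0` is constant on a nonempty set
`B ⊆ (ℂ*)ⁿ`, where `v ∈ ℤⁿ` is nonzero and primitive, then `B` is contained in a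
multiplicative translate `a · C_v` of the holomorphic cylinder
`C_v = {(e^{v₁ w}, …, e^{vₙ w})}` parallel to `v`. -/
theorem contained_in_cylinder {n : ℕ} (B : Set (Fin n → ℂˣ)) (hB : B.Nonempty)
    (v : Fin n → ℤ) (hv : v ≠ 0)
    (hprim : Finset.univ.gcd v = 1)
    (hconst : ∀ ν : Fin n → ℤ, (∑ i, ν i * v i) = 0 →
      ∀ z ∈ B, ∀ w ∈ B, (∏ i, z i ^ ν i) = ∏ i, w i ^ ν i) :
    ∃ a : Fin n → ℂˣ, ∀ z ∈ B, ∃ w : ℂ,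
      ∀ i, (z i : ℂ) = (a i : ℂ) * Complex.exp ((v i : ℂ) * w) := by
  classical
  obtain ⟨b, hb⟩ := hB
  obtain ⟨u, hu⟩ := exists_bezout_finset Finset.univ v
  rw [hprim] at hu
  refine ⟨b, fun z hz => ?_⟩
  set y : Fin n → ℂˣ := fun i => z i * (b i)⁻¹ with hy_def
  have hy : ∀ ν : Fin n → ℤ, (∑ i, ν i * v i) = 0 → ∏ i, y i ^ ν i = 1 := by
    intro ν hν
    have h := hconst ν hν z hz b hb
    simp only [hy_def, mul_zpow, inv_zpow]
    rw [Finset.prod_mul_distrib, h, Finset.prod_inv_distrib]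
    simp
  set c : ℂˣ := ∏ j, y j ^ u j with hc
  have hyi : ∀ i, y i = c ^ (v i) := by
    intro i
    have hsum : (∑ j, ((if j = i then 1 else 0) - v i * u j) * v j) = 0 := by
      simp only [sub_mul, Finset.sum_sub_distrib, ite_mul, one_mul, zero_mul,
        Finset.sum_ite_eq', Finset.mem_univ, if_pos, mul_assoc, ← Finset.mul_sum, hu]
      simp
    have h := hy _ hsum
    have h2 : ∏ j, y j ^ ((if j = i then 1 else 0) - v i * u j)
        = y i * (c ^ v i)⁻¹ := by
      simp only [zpow_sub]
      rw [Finset.prod_mul_distrib]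
      congr 1
      · simp [Finset.prod_ite_eq']
      · rw [Finset.prod_inv_distrib]
        congr 1
        rw [hc, ← Finset.prod_zpow]
        refine Finset.prod_congr rfl fun j _ => ?_
        rw [← zpow_mul, mul_comm]
    rw [h2] at h
    exact (mul_inv_eq_one.mp h)
  refine ⟨Complex.log (c : ℂ), fun i => ?_⟩
  have hz_eq : (z i : ℂ) = (b i : ℂ) * (y i : ℂ) := by
    have hb0 : (b i : ℂ) ≠ 0 := (b i).ne_zero
    simp only [hy_def, Units.val_mul]
    field_simp
    exact (Units.mul_inv (b i)).symm
  rw [hz_eq, hyi i]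
  congr 1
  have hc0 : (c : ℂ) ≠ 0 := c.ne_zero
  rw [Complex.exp_int_mul, Complex.exp_log hc0]
  simp
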